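/- For every j ≥ 0, (log(1+x) - x + x²/2)^j / j! = Σ_{l≥3j} (-1)^{l-j} d₃(l,j) x^l / l! as formal power series. -/

import Mathlib

/-- `d3 n k`: the number of permutations of an `n`-element set having exactly `k` cycles,
all of length at least `3` (in particular, without fixed points). -/
noncomputable def d3 (n k : ℕ) : ℕ :=
  Nat.card {σ : Equiv.Perm (Fin n) //
    σ.support = Finset.univ ∧ σ.cycleType.card = k ∧ ∀ i ∈ σ.cycleType, 3 ≤ i}

/-- The formal power series `log(1+X) = Σ_{n≥1} (-1)^{n+1} X^n/n`. -/
noncomputable def logOneAdd : PowerSeries ℚ :=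
  PowerSeries.mk fun n => if n = 0 then 0 else (-1 : ℚ) ^ (n + 1) / n

set_option maxHeartbeats 1000000

section CombinatoricsAux
open Equiv Perm Finset List


lemma d3_zero_zero : d3 0 0 = 1 := by
  unfold d3
  have : ∀ σ : Equiv.Perm (Fin 0), σ.support = Finset.univ ∧ σ.cycleType.card = 0 ∧
      ∀ i ∈ σ.cycleType, 3 ≤ i := by
    intro σ
    have hσ : σ = 1 := Subsingleton.elim _ _
    subst hσ
    simp
  haveI : Unique {σ : Equiv.Perm (Fin 0) // σ.support = Finset.univ ∧ σ.cycleType.card = 0 ∧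
      ∀ i ∈ σ.cycleType, 3 ≤ i} :=
    { default := ⟨1, this 1⟩, uniq := fun a => by ext1; exact Subsingleton.elim _ _ }
  exact Nat.card_unique

lemma d3_zero_of_ne {l : ℕ} (hl : l ≠ 0) : d3 l 0 = 0 := by
  unfold d3
  rw [Nat.card_eq_zero]
  left
  constructor
  rintro ⟨σ, h1, h2, -⟩
  rw [Multiset.card_eq_zero, cycleType_eq_zero] at h2
  subst h2
  rw [support_one] at h1
  have : (⟨0, Nat.pos_of_ne_zero hl⟩ : Fin l) ∈ (∅ : Finset (Fin l)) := by
    rw [h1]; exact Finset.mem_univ _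
  simp at this

lemma d3_zero_succ (j : ℕ) : d3 0 (j + 1) = 0 := by
  unfold d3
  rw [Nat.card_eq_zero]
  left
  constructor
  rintro ⟨σ, h1, h2, -⟩
  have hσ : σ = 1 := Subsingleton.elim _ _
  subst hσ
  simp at h2


variable {α β : Type*} [Fintype α] [DecidableEq α] [Fintype β] [DecidableEq β]

lemma permCongr_eq_extendDomain (e : α ≃ β) (g : Equiv.Perm α) :
    e.permCongr g = g.extendDomain (e.trans (Equiv.subtypeUnivEquiv (fun _ : β => trivial)).symm) := by
  ext b
  rw [Equiv.Perm.extendDomain_apply_subtype _ _ trivial]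
  simp [Equiv.subtypeUnivEquiv]

lemma cycleType_permCongr (e : α ≃ β) (g : Equiv.Perm α) :
    (e.permCongr g).cycleType = g.cycleType := by
  rw [permCongr_eq_extendDomain, Equiv.Perm.cycleType_extendDomain]

lemma card_support_permCongr (e : α ≃ β) (g : Equiv.Perm α) :
    (e.permCongr g).support.card = g.support.card := by
  rw [permCongr_eq_extendDomain, Equiv.Perm.card_support_extend_domain]

lemma support_permCongr_univ (e : α ≃ β) (g : Equiv.Perm α) :
    (e.permCongr g).support = Finset.univ ↔ g.support = Finset.univ := by
  rw [← Finset.card_eq_iff_eq_univ, ← Finset.card_eq_iff_eq_univ, card_support_permCongr,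
    Fintype.card_congr e]

lemma d3_card_eq (α : Type*) [Fintype α] [DecidableEq α] (k : ℕ) :
    Nat.card {σ : Equiv.Perm α //
      σ.support = Finset.univ ∧ σ.cycleType.card = k ∧ ∀ i ∈ σ.cycleType, 3 ≤ i} =
    d3 (Fintype.card α) k := by
  classical
  have e : α ≃ Fin (Fintype.card α) := Fintype.equivFin α
  unfold d3
  refine Nat.card_congr (Equiv.subtypeEquiv e.permCongr fun σ => ?_)
  rw [support_permCongr_univ, cycleType_permCongr]


lemma toList_eq_ofFn {α : Type*} [Fintype α] [DecidableEq α] (c : Equiv.Perm α) (x : α)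
    (hc : c.IsCycle) (hx : x ∈ c.support) :
    c.toList x = List.ofFn (fun i : Fin c.support.card => (c ^ (i : ℕ)) x) := by
  have hcy : c.cycleOf x = c := hc.cycleOf_eq (Equiv.Perm.mem_support.mp hx)
  have hlen : (c.toList x).length = c.support.card := by
    rw [Equiv.Perm.length_toList, hcy]
  apply List.ext_get
  · simp [hlen]
  · intro n h1 h2
    rw [List.get_eq_getElem, Equiv.Perm.getElem_toList]
    simp only [List.get_ofFn]
    congr 1

lemma pow_apply_injective {α : Type*} [Fintype α] [DecidableEq α] (c : Equiv.Perm α) (x : α)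
    (hc : c.IsCycle) (hx : x ∈ c.support) :
    Function.Injective (fun i : Fin c.support.card => (c ^ (i : ℕ)) x) := by
  have := c.nodup_toList x
  rw [toList_eq_ofFn c x hc hx, List.nodup_ofFn] at this
  exact this

lemma card_cycles_at_point (N m : ℕ) (hm : 2 ≤ m) :
    Nat.card {c : Equiv.Perm (Fin (N + 1)) //
      c.IsCycle ∧ (0 : Fin (N + 1)) ∈ c.support ∧ c.support.card = m} =
    N.descFactorial (m - 1) := by
  classical
  obtain ⟨k, rfl⟩ : ∃ k, m = k + 2 := ⟨m - 2, by omega⟩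
  have hcard : Fintype.card {x : Fin (N + 1) // x ≠ 0} = N := by
    simp [Fintype.card_subtype_compl]
  have key : ∀ (f : Fin (k + 1) ↪ {x : Fin (N + 1) // x ≠ 0}),
      ((0 : Fin (N+1)) :: List.ofFn (fun i => ((f i : {x : Fin (N+1) // x ≠ 0}) : Fin (N+1)))).Nodup ∧
      ((0 : Fin (N+1)) :: List.ofFn (fun i => ((f i : {x : Fin (N+1) // x ≠ 0}) : Fin (N+1)))).length = k + 2 := by
    intro f
    constructor
    · rw [List.nodup_cons]
      constructor
      · intro h
        obtain ⟨i, hi⟩ := List.mem_ofFn.mp h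
        exact (f i).2 hi
      · rw [List.nodup_ofFn]
        exact fun a b hab => f.injective (Subtype.ext hab)
    · simp
  have E : {c : Equiv.Perm (Fin (N + 1)) //
      c.IsCycle ∧ (0 : Fin (N + 1)) ∈ c.support ∧ c.support.card = k + 2} ≃
      (Fin (k + 1) ↪ {x : Fin (N + 1) // x ≠ 0}) := by
    refine
      { toFun := fun c => ⟨fun i => ⟨((c : Equiv.Perm (Fin (N+1))) ^ ((i : ℕ) + 1)) 0, ?_⟩, ?_⟩
        invFun := fun f =>
          ⟨(0 :: List.ofFn (fun i => ((f i : {x : Fin (N+1) // x ≠ 0}) : Fin (N+1)))).formPerm,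
            ?_, ?_, ?_⟩
        left_inv := ?_
        right_inv := ?_ }
    · -- value ≠ 0
      obtain ⟨c, hc, h0, hcd⟩ := c
      have hinj := pow_apply_injective c 0 hc h0
      intro h
      have : (⟨(i : ℕ) + 1, by omega⟩ : Fin c.support.card) = ⟨0, by rw [hcd]; omega⟩ := by
        apply hinj
        simpa using h
      simp at this
    · -- injectivity
      obtain ⟨c, hc, h0, hcd⟩ := c
      intro a b hab
      have hinj := pow_apply_injective c 0 hc h0
      have : (⟨(a : ℕ) + 1, by omega⟩ : Fin c.support.card) = ⟨(b : ℕ) + 1, by omega⟩ := by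
        apply hinj
        simpa using congrArg Subtype.val hab
      have := congrArg Fin.val this
      simp at this
      exact Fin.ext this
    · -- IsCycle
      exact List.isCycle_formPerm (key f).1 (by rw [(key f).2]; omega)
    · -- 0 ∈ support
      rw [List.support_formPerm_of_nodup _ (key f).1 (by intro x h; have := congrArg List.length h; rw [(key f).2] at this; simp at this)]
      simp
    · -- card support
      rw [List.support_formPerm_of_nodup _ (key f).1 (by intro x h; have := congrArg List.length h; rw [(key f).2] at this; simp at this),
        List.toFinset_card_of_nodup (key f).1, (key f).2]
    · -- left_inv
      rintro ⟨c, hc, h0, hcd⟩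
      apply Subtype.ext
      show ((0 : Fin (N+1)) :: List.ofFn (fun i : Fin (k+1) => (c ^ ((i : ℕ) + 1)) 0)).formPerm = c
      have hlist : (0 :: List.ofFn (fun i : Fin (k+1) => (c ^ ((i : ℕ) + 1)) 0))
          = c.toList 0 := by
        rw [toList_eq_ofFn c 0 hc h0]
        have : c.support.card = k + 1 + 1 := by omega
        rw [this, List.ofFn_succ]
        simp
      rw [hlist, Equiv.Perm.formPerm_toList, hc.cycleOf_eq (Equiv.Perm.mem_support.mp h0)]
    · -- right_inv
      intro f
      apply Function.Embedding.ext
      intro i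
      apply Subtype.ext
      set ls := ((0 : Fin (N+1)) :: List.ofFn (fun i => ((f i : {x : Fin (N+1) // x ≠ 0}) : Fin (N+1)))) with hls
      show ((ls.formPerm) ^ ((i : ℕ) + 1)) 0 = ((f i : {x : Fin (N+1) // x ≠ 0}) : Fin (N+1))
      have hlen : ls.length = k + 2 := (key f).2
      have hl0 : (0:ℕ) < ls.length := by rw [hlen]; omega
      have h0 : ls[0]'hl0 = (0 : Fin (N+1)) := rfl
      have := List.formPerm_pow_apply_getElem ls (key f).1 ((i : ℕ) + 1) 0 hl0
      rw [h0] at this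
      have e1 : (0 + ((i : ℕ) + 1)) = (i : ℕ) + 1 := by omega
      simp only [e1, hlen] at this
      rw [this]
      have e2 : ((i : ℕ) + 1) % (k + 2) = (i : ℕ) + 1 := Nat.mod_eq_of_lt (by have := i.isLt; omega)
      simp only [e2, hls, List.getElem_cons_succ, List.getElem_ofFn]
  rw [Nat.card_congr E, Nat.card_eq_fintype_card, Fintype.card_embedding_eq, hcard,
    Fintype.card_fin]
  congr 1

section
variable {M : ℕ}


lemma map_subtype_univ (t : Finset (Fin M)) :
    Finset.map (Function.Embedding.subtype (· ∈ t)) Finset.univ = t := by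
  ext x
  simp


lemma card_fullsupport_subtype (t : Finset (Fin M)) (j : ℕ) :
    Nat.card {τ : Equiv.Perm (Fin M) //
      τ.support = t ∧ τ.cycleType.card = j ∧ ∀ i ∈ τ.cycleType, 3 ≤ i} = d3 t.card j := by
  letI F : Fintype {x : Fin M // x ∈ t} := Subtype.fintype _
  have hfix : ∀ (τ : Equiv.Perm (Fin M)) (ht : τ.support = t) (x : Fin M), τ x ≠ x → x ∈ t :=
    fun τ ht x hx => ht ▸ Equiv.Perm.mem_support.mpr hx
  have hiff : ∀ (τ : Equiv.Perm (Fin M)) (ht : τ.support = t) (x : Fin M), τ x ∈ t ↔ x ∈ t := by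
    intro τ ht x
    rw [← ht]
    exact Equiv.Perm.apply_mem_support
  have E : {σ : Equiv.Perm {x : Fin M // x ∈ t} //
      σ.support = Finset.univ ∧ σ.cycleType.card = j ∧ ∀ i ∈ σ.cycleType, 3 ≤ i} ≃
      {τ : Equiv.Perm (Fin M) //
      τ.support = t ∧ τ.cycleType.card = j ∧ ∀ i ∈ τ.cycleType, 3 ≤ i} := by
    refine Equiv.ofBijective (fun σ' => ⟨Equiv.Perm.ofSubtype σ'.val, ?_, ?_, ?_⟩) ⟨?_, ?_⟩
    · rw [Equiv.Perm.support_ofSubtype, σ'.2.1]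
      ext x; simp
    · rw [Equiv.Perm.cycleType_ofSubtype]; exact σ'.2.2.1
    · rw [Equiv.Perm.cycleType_ofSubtype]; exact σ'.2.2.2
    · rintro ⟨σ1, h1⟩ ⟨σ2, h2⟩ h
      have h' : Equiv.Perm.ofSubtype σ1 = Equiv.Perm.ofSubtype σ2 := congrArg Subtype.val h
      apply Subtype.ext
      ext x
      have := congrFun (congrArg (fun (g : Equiv.Perm (Fin M)) => (g : Fin M → Fin M)) h') x.val
      rw [Equiv.Perm.ofSubtype_apply_of_mem σ1 x.2, Equiv.Perm.ofSubtype_apply_of_mem σ2 x.2,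
        Subtype.val_inj] at this
      rw [this]
    · rintro ⟨τ, ht, hj, h3⟩
      refine ⟨⟨τ.subtypePerm (hiff τ ht), ?_, ?_, ?_⟩, ?_⟩
      · apply Finset.map_injective (Function.Embedding.subtype (· ∈ t))
        rw [← Equiv.Perm.support_ofSubtype,
          Equiv.Perm.ofSubtype_subtypePerm (hiff τ ht) (hfix τ ht), ht]
        ext x; simp
      · rw [← Equiv.Perm.cycleType_ofSubtype,
          Equiv.Perm.ofSubtype_subtypePerm (hiff τ ht) (hfix τ ht)]
        exact hj
      · rw [← Equiv.Perm.cycleType_ofSubtype,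
          Equiv.Perm.ofSubtype_subtypePerm (hiff τ ht) (hfix τ ht)]
        exact h3
      · exact Subtype.ext (Equiv.Perm.ofSubtype_subtypePerm (hiff τ ht) (hfix τ ht))
  calc Nat.card _ = Nat.card {σ : Equiv.Perm {x : Fin M // x ∈ t} //
      σ.support = Finset.univ ∧ σ.cycleType.card = j ∧ ∀ i ∈ σ.cycleType, 3 ≤ i} :=
        (Nat.card_congr E).symm
    _ = d3 (Fintype.card {x : Fin M // x ∈ t}) j := d3_card_eq _ j
    _ = d3 t.card j := by rw [Fintype.card_coe]

lemma fiber_count (j : ℕ) (x0 : Fin M) (c : Equiv.Perm (Fin M)) (hc : c.IsCycle)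
    (hx0 : x0 ∈ c.support) (h3 : 3 ≤ c.support.card) :
    Nat.card {σ : Equiv.Perm (Fin M) //
      (σ.support = Finset.univ ∧ σ.cycleType.card = j + 1 ∧ ∀ i ∈ σ.cycleType, 3 ≤ i) ∧
        σ.cycleOf x0 = c} = d3 (M - c.support.card) j := by
  classical
  have hcompl : (c.supportᶜ : Finset (Fin M)).card = M - c.support.card := by
    rw [Finset.card_compl, Fintype.card_fin]
  rw [← hcompl, ← card_fullsupport_subtype c.supportᶜ j]
  have fwd : ∀ σ : Equiv.Perm (Fin M),
      (σ.support = Finset.univ ∧ σ.cycleType.card = j + 1 ∧ ∀ i ∈ σ.cycleType, 3 ≤ i) →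
      σ.cycleOf x0 = c →
      (σ * c⁻¹).support = c.supportᶜ ∧ (σ * c⁻¹).cycleType.card = j ∧
        ∀ i ∈ (σ * c⁻¹).cycleType, 3 ≤ i := by
    rintro σ ⟨hsupp, hcard, hge⟩ hcy
    have hmem : c ∈ σ.cycleFactorsFinset := by
      rw [← hcy]
      exact Equiv.Perm.cycleOf_mem_cycleFactorsFinset_iff.mpr (by rw [hsupp]; exact Finset.mem_univ x0)
    have hd : (σ * c⁻¹).Disjoint c := Equiv.Perm.disjoint_mul_inv_of_mem_cycleFactorsFinset hmem
    have hσ : (σ * c⁻¹) * c = σ := by simp [mul_assoc]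
    have hds := Equiv.Perm.disjoint_iff_disjoint_support.mp hd
    have hun : (σ * c⁻¹).support ∪ c.support = Finset.univ := by
      have := hd.support_mul
      rw [hσ, hsupp] at this
      exact this.symm
    have hct : σ.cycleType = (σ * c⁻¹).cycleType + c.cycleType := by
      have := hd.cycleType_mul
      rwa [hσ] at this
    refine ⟨?_, ?_, ?_⟩
    · ext x
      simp only [Finset.mem_compl]
      constructor
      · exact fun hx => Finset.disjoint_left.mp hds hx
      · intro hx
        have : x ∈ (σ * c⁻¹).support ∪ c.support := by rw [hun]; exact Finset.mem_univ x
        rcases Finset.mem_union.mp this with h | h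
        · exact h
        · exact absurd h hx
    · rw [hct, Multiset.card_add, hc.cycleType, Multiset.card_singleton] at hcard
      omega
    · intro i hi
      refine hge i ?_
      rw [hct]
      exact Multiset.mem_add.mpr (Or.inl hi)
  refine Nat.card_congr (Equiv.ofBijective
    (fun σ => ⟨σ.val * c⁻¹, fwd σ.val σ.2.1 σ.2.2⟩) ⟨?_, ?_⟩)
  · rintro ⟨σ1, h1⟩ ⟨σ2, h2⟩ h
    have h' : σ1 * c⁻¹ = σ2 * c⁻¹ := congrArg Subtype.val h
    exact Subtype.ext (mul_right_cancel h')
  · rintro ⟨τ, ht, hj, h3'⟩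
    have hdisj : (τ : Equiv.Perm (Fin M)).Disjoint c := by
      rw [Equiv.Perm.disjoint_iff_disjoint_support, ht]
      exact disjoint_compl_left
    have hsupp : (τ * c).support = Finset.univ := by
      rw [hdisj.support_mul, ht]
      ext x
      simp only [Finset.mem_union, Finset.mem_compl, Finset.mem_univ, iff_true]
      exact Or.symm (em _)
    have hct : (τ * c).cycleType = τ.cycleType + c.cycleType := hdisj.cycleType_mul
    have hmemc : c ∈ (τ * c).cycleFactorsFinset := by
      rw [Equiv.Perm.mem_cycleFactorsFinset_iff]
      refine ⟨hc, fun a ha => ?_⟩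
      have hmem : c a ∈ c.support := Equiv.Perm.apply_mem_support.mpr ha
      have hfix : τ (c a) = c a := by
        apply Equiv.Perm.notMem_support.mp
        rw [ht]
        simpa using hmem
      show c a = (τ * c) a
      rw [Equiv.Perm.mul_apply, hfix]
    refine ⟨⟨τ * c, ⟨hsupp, ?_, ?_⟩, ?_⟩, ?_⟩
    · rw [hct, hc.cycleType]
      simp [hj]
    · intro i hi
      rw [hct] at hi
      rcases Multiset.mem_add.mp hi with h | h
      · exact h3' i h
      · rw [hc.cycleType] at h
        simp at h
        omega
    · exact (Equiv.Perm.cycle_is_cycleOf hx0 hmemc).symm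
    · apply Subtype.ext
      show (τ * c) * c⁻¹ = τ
      simp [mul_assoc]


lemma d3_key (N j : ℕ) :
    d3 (N + 1) (j + 1) = ∑ n ∈ Finset.range (N + 1),
      (if n + 2 ≤ N then N.descFactorial (N - n) * d3 n j else 0) := by
  classical
  set P : Equiv.Perm (Fin (N + 1)) → Prop := fun σ =>
    σ.support = Finset.univ ∧ σ.cycleType.card = j + 1 ∧ ∀ i ∈ σ.cycleType, 3 ≤ i with hP
  set Q : Equiv.Perm (Fin (N + 1)) → Prop := fun c =>
    c.IsCycle ∧ (0 : Fin (N + 1)) ∈ c.support ∧ 3 ≤ c.support.card with hQ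
  have hd3 : d3 (N + 1) (j + 1) = (Finset.univ.filter P).card := by
    rw [d3, Nat.card_eq_fintype_card, Fintype.card_subtype]
  -- maps-to
  have hmaps : ∀ σ ∈ Finset.univ.filter P, σ.cycleOf 0 ∈ Finset.univ.filter Q := by
    intro σ hσ
    obtain ⟨hsupp, hcard, hge⟩ := (Finset.mem_filter.mp hσ).2
    have h0 : (0 : Fin (N + 1)) ∈ σ.support := by rw [hsupp]; exact Finset.mem_univ _
    have hcyc : (σ.cycleOf 0).IsCycle := Equiv.Perm.isCycle_cycleOf σ (Equiv.Perm.mem_support.mp h0)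
    have h0' : (0 : Fin (N + 1)) ∈ (σ.cycleOf 0).support :=
      Equiv.Perm.mem_support_cycleOf_iff.mpr ⟨Equiv.Perm.SameCycle.refl _ _, h0⟩
    have hmemct : (σ.cycleOf 0).support.card ∈ σ.cycleType := by
      rw [Equiv.Perm.cycleType_def]
      exact Multiset.mem_map_of_mem _
        (Equiv.Perm.cycleOf_mem_cycleFactorsFinset_iff.mpr h0)
    exact Finset.mem_filter.mpr ⟨Finset.mem_univ _, hcyc, h0', hge _ hmemct⟩
  rw [hd3, Finset.card_eq_sum_card_fiberwise hmaps]
  -- fiber cards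
  have hfib : ∀ c ∈ Finset.univ.filter Q,
      ((Finset.univ.filter P).filter (fun σ => σ.cycleOf 0 = c)).card
        = d3 (N + 1 - c.support.card) j := by
    intro c hc
    obtain ⟨hcyc, h0, h3⟩ := (Finset.mem_filter.mp hc).2
    rw [Finset.filter_filter, ← Fintype.card_subtype, ← Nat.card_eq_fintype_card]
    exact fiber_count j 0 c hcyc h0 h3
  rw [Finset.sum_congr rfl hfib]
  -- group by support card
  have hmaps2 : ∀ c ∈ Finset.univ.filter Q, c.support.card ∈ Finset.range (N + 2) := by
    intro c _
    have := Finset.card_le_univ c.support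
    simp only [Finset.mem_range, Fintype.card_fin] at *
    omega
  rw [← Finset.sum_fiberwise_of_maps_to hmaps2 (fun c => d3 (N + 1 - c.support.card) j)]
  have hinner : ∀ m ∈ Finset.range (N + 2),
      (∑ c ∈ (Finset.univ.filter Q).filter (fun c => c.support.card = m),
        d3 (N + 1 - c.support.card) j)
      = (if 3 ≤ m then N.descFactorial (m - 1) * d3 (N + 1 - m) j else 0) := by
    intro m _
    have hconst : ∀ c ∈ (Finset.univ.filter Q).filter (fun c => c.support.card = m),
        d3 (N + 1 - c.support.card) j = d3 (N + 1 - m) j := by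
      intro c hc
      rw [(Finset.mem_filter.mp hc).2]
    rw [Finset.sum_congr rfl hconst, Finset.sum_const, smul_eq_mul]
    by_cases h3m : 3 ≤ m
    · rw [if_pos h3m]
      congr 1
      have hpred : ∀ c : Equiv.Perm (Fin (N + 1)),
          (Q c ∧ c.support.card = m) ↔
          (c.IsCycle ∧ (0 : Fin (N + 1)) ∈ c.support ∧ c.support.card = m) := by
        intro c
        rw [hQ]
        constructor
        · rintro ⟨⟨h1, h2, _⟩, h4⟩; exact ⟨h1, h2, h4⟩
        · rintro ⟨h1, h2, h4⟩; exact ⟨⟨h1, h2, h4 ▸ h3m⟩, h4⟩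
      rw [Finset.filter_filter, ← Fintype.card_subtype, ← Nat.card_eq_fintype_card]
      rw [Nat.card_congr (Equiv.subtypeEquivRight hpred)]
      exact card_cycles_at_point N m (by omega)
    · rw [if_neg h3m]
      have hz : ((Finset.univ.filter Q).filter (fun c => c.support.card = m)).card = 0 := by
        rw [Finset.card_eq_zero, Finset.filter_filter, Finset.filter_eq_empty_iff]
        rintro c - ⟨⟨-, -, hge3⟩, hm⟩
        omega
      rw [hz, zero_mul]
  rw [Finset.sum_congr rfl hinner]
  -- reindex
  have := Finset.sum_range_reflect
    (fun m => if 3 ≤ m then N.descFactorial (m - 1) * d3 (N + 1 - m) j else 0) (N + 2)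
  rw [← this, Finset.sum_range_succ]
  have hlast : (if 3 ≤ N + 2 - 1 - (N + 1) then
      N.descFactorial (N + 2 - 1 - (N + 1) - 1) * d3 (N + 1 - (N + 2 - 1 - (N + 1))) j else 0) = 0 := by
    have : N + 2 - 1 - (N + 1) = 0 := by omega
    rw [this]
    norm_num
  rw [hlast, add_zero]
  apply Finset.sum_congr rfl
  intro i hi
  have hi' : i ≤ N := by simpa [Nat.lt_succ_iff] using hi
  have h1 : N + 2 - 1 - i = N + 1 - i := by omega
  rw [h1]
  by_cases hc : i + 2 ≤ N
  · rw [if_pos (by omega : 3 ≤ N + 1 - i), if_pos hc]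
    have h2 : N + 1 - i - 1 = N - i := by omega
    have h3 : N + 1 - (N + 1 - i) = i := by omega
    rw [h2, h3]
  · rw [if_neg (by omega : ¬ 3 ≤ N + 1 - i), if_neg hc]

end
end CombinatoricsAux

open PowerSeries

local notation "A" => (logOneAdd - PowerSeries.X + (1/2 : ℚ) • PowerSeries.X ^ 2)

lemma coeff_A (n : ℕ) : (coeff (R := ℚ) n) A = if n < 3 then 0 else (-1 : ℚ) ^ (n + 1) / n := by
  rw [map_add, map_sub, coeff_smul, logOneAdd, coeff_mk, coeff_X, coeff_X_pow]
  match n with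
  | 0 => norm_num
  | 1 => norm_num
  | 2 => norm_num
  | (m + 3) => simp

lemma coeff_dA (m : ℕ) :
    (coeff (R := ℚ) m) (PowerSeries.derivative ℚ A) = if m < 2 then 0 else (-1 : ℚ) ^ m := by
  rw [coeff_derivative, coeff_A]
  match m with
  | 0 => norm_num
  | 1 => norm_num
  | (k + 2) =>
    rw [if_neg (by omega), if_neg (by omega)]
    have h1 : ((k : ℚ) + 2 + 1) ≠ 0 := by positivity
    have : (-1 : ℚ) ^ (k + 2 + 1 + 1) = (-1) ^ (k + 2) := by
      rw [pow_succ, pow_succ]; ring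
    rw [this]
    push_cast
    field_simp
/-- `(log(1+x) - x + x²/2)^j / j! = Σ_l (-1)^{l-j} d₃(l,j) x^l/l!` as formal power series
(the sign `(-1)^{l-j}` is written `(-1)^{l+j}`, which agrees with it, and
`d₃(l,j) = 0` for `l < 3j`). -/

theorem pow_truncLog_eq_egf_d3 (j : ℕ) :
    PowerSeries.C (R := ℚ) (1 / (Nat.factorial j)) *
        (logOneAdd - PowerSeries.X + (1/2 : ℚ) • PowerSeries.X ^ 2) ^ j =
      PowerSeries.mk fun l => (-1 : ℚ) ^ (l + j) * (d3 l j : ℚ) / (Nat.factorial l) := by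
  induction j with
  | zero =>
    ext n
    rw [pow_zero, Nat.factorial_zero]
    simp only [Nat.cast_one, div_one, map_one, one_mul, coeff_mk, coeff_one]
    match n with
    | 0 => rw [d3_zero_zero]; norm_num
    | (m + 1) => rw [d3_zero_of_ne (Nat.succ_ne_zero m)]; norm_num
  | succ j ih =>
    apply PowerSeries.derivative.ext
    · -- derivatives agree
      have hC : PowerSeries.C (R := ℚ) (1 / (Nat.factorial (j+1))) * ((j : ℚ⟦X⟧) + 1)
          = PowerSeries.C (R := ℚ) (1 / (Nat.factorial j)) := by
        have : ((j : ℚ⟦X⟧) + 1) = PowerSeries.C (R := ℚ) ((j : ℚ) + 1) := by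
          rw [map_add, map_one, map_natCast]
        rw [this, ← map_mul]
        congr 1
        rw [Nat.factorial_succ]
        push_cast
        have h1 : ((j : ℚ) + 1) ≠ 0 := by positivity
        have h2 : ((Nat.factorial j : ℚ)) ≠ 0 := by
          exact_mod_cast Nat.factorial_ne_zero j
        field_simp
      have hL : PowerSeries.derivative ℚ (PowerSeries.C (R := ℚ) (1 / (Nat.factorial (j+1))) * A ^ (j+1)) =
          (PowerSeries.derivative ℚ A) * (PowerSeries.C (R := ℚ) (1 / (Nat.factorial j)) * A ^ j) := by
        rw [Derivation.leibniz, PowerSeries.derivative_C, smul_zero, add_zero,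
          Derivation.leibniz_pow]
        simp only [smul_eq_mul, Nat.add_sub_cancel, nsmul_eq_mul]
        push_cast
        rw [← hC]
        ring
      rw [hL, ih]
      -- now coefficientwise
      ext n
      rw [coeff_derivative, coeff_mk, coeff_mul, Finset.Nat.sum_antidiagonal_eq_sum_range_succ_mk]
      have hterm : ∀ m ∈ Finset.range (n + 1),
          (coeff (R := ℚ) m) (PowerSeries.derivative ℚ A) *
              (coeff (R := ℚ) (n - m)) (PowerSeries.mk fun l => (-1 : ℚ) ^ (l + j) * (d3 l j : ℚ) / (Nat.factorial l))
            = (if m < 2 then 0 else (-1 : ℚ) ^ m) *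
              ((-1 : ℚ) ^ ((n - m) + j) * (d3 (n - m) j : ℚ) / (Nat.factorial (n - m))) := by
        intro m _
        rw [coeff_dA, coeff_mk]
      rw [Finset.sum_congr rfl hterm, ← Finset.sum_range_reflect]
      rw [d3_key n j]
      have hRHS : (-1 : ℚ) ^ (n + 1 + (j + 1)) *
          (((∑ p ∈ Finset.range (n + 1),
            (if p + 2 ≤ n then n.descFactorial (n - p) * d3 p j else 0)) : ℕ) : ℚ) /
            (Nat.factorial (n + 1)) * ((n : ℚ) + 1)
          = ∑ p ∈ Finset.range (n + 1), (if p + 2 ≤ n then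
              (-1 : ℚ) ^ (n + j) * ((n.descFactorial (n - p) : ℚ) * (d3 p j : ℚ)) / (Nat.factorial n)
            else 0) := by
        have hsign : (-1 : ℚ) ^ (n + 1 + (j + 1)) = (-1 : ℚ) ^ (n + j) := by
          have : n + 1 + (j + 1) = (n + j) + 2 := by omega
          rw [this, pow_add]
          norm_num
        have hfac : ((Nat.factorial (n + 1) : ℚ)) = ((n : ℚ) + 1) * (Nat.factorial n) := by
          rw [Nat.factorial_succ]; push_cast; ring
        rw [hsign, hfac]
        push_cast
        rw [Finset.mul_sum, Finset.sum_div, Finset.sum_mul]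
        apply Finset.sum_congr rfl
        intro p _
        by_cases hp2 : p + 2 ≤ n
        · rw [if_pos hp2, if_pos hp2]
          have hn1 : ((n : ℚ) + 1) ≠ 0 := by positivity
          have hfn : ((Nat.factorial n : ℚ)) ≠ 0 := by exact_mod_cast Nat.factorial_ne_zero n
          field_simp
        · rw [if_neg hp2, if_neg hp2]
          simp
      rw [hRHS]
      apply Finset.sum_congr rfl
      intro p hp
      have hpn : p ≤ n := by
        simp only [Finset.mem_range] at hp; omega
      have e0 : n + 1 - 1 - p = n - p := by omega
      have e1 : n - (n - p) = p := by omega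
      rw [e0, e1]
      by_cases hp2 : p + 2 ≤ n
      · rw [if_neg (by omega : ¬ n - p < 2), if_pos hp2]
        have hsign : (-1 : ℚ) ^ (n - p) * (-1 : ℚ) ^ (p + j) = (-1 : ℚ) ^ (n + j) := by
          rw [← pow_add]
          congr 1
          omega
        have hfact : (Nat.factorial p : ℚ) * (n.descFactorial (n - p) : ℚ) = (Nat.factorial n : ℚ) := by
          have h := Nat.factorial_mul_descFactorial (show n - p ≤ n by omega)
          rw [e1] at h
          exact_mod_cast h
        have hfp : ((Nat.factorial p : ℚ)) ≠ 0 := by exact_mod_cast Nat.factorial_ne_zero p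
        have hfn : ((Nat.factorial n : ℚ)) ≠ 0 := by exact_mod_cast Nat.factorial_ne_zero n
        calc (-1 : ℚ) ^ (n - p) * ((-1 : ℚ) ^ (p + j) * (d3 p j : ℚ) / (Nat.factorial p))
            = ((-1 : ℚ) ^ (n - p) * (-1 : ℚ) ^ (p + j)) * (d3 p j : ℚ) / (Nat.factorial p) := by
              ring
          _ = (-1 : ℚ) ^ (n + j) * (d3 p j : ℚ) / (Nat.factorial p) := by rw [hsign]
          _ = (-1 : ℚ) ^ (n + j) * ((n.descFactorial (n - p) : ℚ) * (d3 p j : ℚ)) / (Nat.factorial n) := by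
              rw [div_eq_div_iff hfp hfn, ← hfact]
              ring
      · rw [if_pos (by omega : n - p < 2), if_neg hp2, zero_mul]
    · -- constant coefficients agree
      have h1 : (PowerSeries.constantCoeff (R := ℚ)) ((PowerSeries.C (R := ℚ)) (1 / (Nat.factorial (j+1) : ℚ)) * A ^ (j+1))
          = 0 := by
        rw [map_mul, map_pow]
        have hA0 : (PowerSeries.constantCoeff (R := ℚ)) A = 0 := by
          rw [← coeff_zero_eq_constantCoeff, coeff_A]
          norm_num
        rw [hA0, zero_pow (Nat.succ_ne_zero j), mul_zero]
      have h2 : (PowerSeries.constantCoeff (R := ℚ))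
          (PowerSeries.mk fun l => (-1 : ℚ) ^ (l + (j+1)) * (d3 l (j+1) : ℚ) / (Nat.factorial l)) = 0 := by
        rw [← coeff_zero_eq_constantCoeff, coeff_mk, d3_zero_succ]
        norm_num
      rw [h1, h2]
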